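/- arXiv:2604.05187 — 3 statements merged into one kernel-verified Lean document; each statement's English description precedes it below -/
import Mathlib

section
/- Let f : ℝ → ℂ be continuous with compact support, let ω(k) = √(k⁴ + 1), and define φ, u : ℝ × ℝ → ℂ by φ(x, t) = (1/(2π)) ∫_ℝ exp(i·k·x − ω(k)·t)·f(k) dk and u(x, t) = (1/(2π)) ∫_ℝ exp(i·k·x − ω(k)·t)·(k² − ω(k))·f(k) dk. Then for all (x, t) ∈ ℝ², ∂φ/∂t (x,t) = ∂²φ/∂x² (x,t) + u(x,t). -/
open MeasureTheory Metric

noncomputable abbrev E0 (x t k : ℝ) : ℂ :=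
  Complex.exp (Complex.I * (k : ℂ) * (x : ℂ) - (Real.sqrt (k ^ 4 + 1) : ℂ) * (t : ℂ))

lemma contE (x t : ℝ) : Continuous (fun k : ℝ => E0 x t k) := by
  apply Complex.continuous_exp.comp
  fun_prop

lemma normE (x t k : ℝ) : ‖E0 x t k‖ = Real.exp (-(Real.sqrt (k ^ 4 + 1)) * t) := by
  rw [Complex.norm_exp]
  congr 1
  simp [Complex.sub_re, Complex.mul_re]

lemma hasDerivAt_E_x (t k x : ℝ) :
    HasDerivAt (fun y : ℝ => E0 y t k) (Complex.I * k * E0 x t k) x := by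
  have h1 : HasDerivAt (fun y : ℝ => ((y : ℂ))) 1 x := Complex.ofRealCLM.hasDerivAt
  have h2 := ((h1.const_mul (Complex.I * (k : ℂ))).sub_const
    ((Real.sqrt (k ^ 4 + 1) : ℂ) * (t : ℂ))).cexp
  convert h2 using 1
  ring

lemma hasDerivAt_E_t (x k t : ℝ) :
    HasDerivAt (fun s : ℝ => E0 x s k)
      (-(Real.sqrt (k ^ 4 + 1) : ℂ) * E0 x t k) t := by
  have h1 : HasDerivAt (fun s : ℝ => ((s : ℂ))) 1 t := Complex.ofRealCLM.hasDerivAt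
  have h2 := ((h1.const_mul ((Real.sqrt (k ^ 4 + 1) : ℂ))).const_sub
    (Complex.I * (k : ℂ) * (x : ℂ))).cexp
  convert h2 using 1
  ring

lemma integrable_mul (f : ℝ → ℂ) (hf : Continuous f) (hs : HasCompactSupport f)
    {g : ℝ → ℂ} (hg : Continuous g) : Integrable fun k => g k * f k :=
  (hg.mul hf).integrable_of_hasCompactSupport hs.mul_left

lemma key_x (f : ℝ → ℂ) (hf : Continuous f) (hs : HasCompactSupport f) (t x : ℝ) :
    HasDerivAt (fun y : ℝ => ∫ k : ℝ, E0 y t k * f k)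
      (∫ k : ℝ, E0 x t k * (Complex.I * k * f k)) x := by
  have H := hasDerivAt_integral_of_dominated_loc_of_deriv_le (μ := volume)
    (F := fun y k => E0 y t k * f k) (F' := fun y k => E0 y t k * (Complex.I * k * f k))
    (bound := fun k => |k| * (Real.exp (-(Real.sqrt (k ^ 4 + 1)) * t) * ‖f k‖))
    (x₀ := x) (ball_mem_nhds x one_pos)
    (Filter.Eventually.of_forall fun y => ((contE y t).mul hf).aestronglyMeasurable)
    (integrable_mul f hf hs (contE x t))
    (((contE x t).mul (by fun_prop)).aestronglyMeasurable)
    (Filter.Eventually.of_forall fun k y _ => by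
      have : ‖E0 y t k * (Complex.I * ↑k * f k)‖
          = |k| * (Real.exp (-(Real.sqrt (k ^ 4 + 1)) * t) * ‖f k‖) := by
        rw [norm_mul, normE, norm_mul, norm_mul, Complex.norm_I, one_mul,
          Complex.norm_real, Real.norm_eq_abs]
        ring
      exact le_of_eq this)
    (by
      apply Continuous.integrable_of_hasCompactSupport
      · fun_prop
      · have : (fun k : ℝ => |k| * (Real.exp (-(Real.sqrt (k ^ 4 + 1)) * t) * ‖f k‖))
            = (fun k : ℝ => |k| * Real.exp (-(Real.sqrt (k ^ 4 + 1)) * t)) * (fun k => ‖f k‖) := by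
          funext k; simp [Pi.mul_apply]; ring
        rw [this]
        exact hs.norm.mul_left)
    (Filter.Eventually.of_forall fun k y _ => by
      have h := (hasDerivAt_E_x t k y).mul_const (f k)
      convert h using 1
      · rfl
      ring)
  exact H.2

lemma key_t (f : ℝ → ℂ) (hf : Continuous f) (hs : HasCompactSupport f) (x t : ℝ) :
    HasDerivAt (fun s : ℝ => ∫ k : ℝ, E0 x s k * f k)
      (∫ k : ℝ, E0 x t k * (-(Real.sqrt (k ^ 4 + 1) : ℂ) * f k)) t := by
  have H := hasDerivAt_integral_of_dominated_loc_of_deriv_le (μ := volume)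
    (F := fun s k => E0 x s k * f k)
    (F' := fun s k => E0 x s k * (-(Real.sqrt (k ^ 4 + 1) : ℂ) * f k))
    (bound := fun k => Real.sqrt (k ^ 4 + 1)
      * (Real.exp (Real.sqrt (k ^ 4 + 1) * (|t| + 1)) * ‖f k‖))
    (x₀ := t) (ball_mem_nhds t one_pos)
    (Filter.Eventually.of_forall fun s => ((contE x s).mul hf).aestronglyMeasurable)
    (integrable_mul f hf hs (contE x t))
    (((contE x t).mul (by fun_prop)).aestronglyMeasurable)
    (Filter.Eventually.of_forall fun k s hsb => by
      have hk0 : 0 ≤ Real.sqrt (k ^ 4 + 1) := Real.sqrt_nonneg _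
      have hsle : |s| ≤ |t| + 1 := by
        have := mem_ball_iff_norm.mp hsb
        have h2 : |s| ≤ |s - t| + |t| := by
          calc |s| = |(s - t) + t| := by ring_nf
          _ ≤ |s - t| + |t| := abs_add_le _ _
        rw [Real.norm_eq_abs] at this
        linarith
      have hexp : Real.exp (-(Real.sqrt (k ^ 4 + 1)) * s)
          ≤ Real.exp (Real.sqrt (k ^ 4 + 1) * (|t| + 1)) := by
        apply Real.exp_le_exp.mpr
        have h1 : -(Real.sqrt (k ^ 4 + 1)) * s ≤ Real.sqrt (k ^ 4 + 1) * |s| := by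
          have := neg_abs_le s
          nlinarith [abs_nonneg s]
        have h2 : Real.sqrt (k ^ 4 + 1) * |s| ≤ Real.sqrt (k ^ 4 + 1) * (|t| + 1) :=
          mul_le_mul_of_nonneg_left hsle hk0
        linarith
      have heq : ‖E0 x s k * (-(Real.sqrt (k ^ 4 + 1) : ℂ) * f k)‖
          = Real.exp (-(Real.sqrt (k ^ 4 + 1)) * s) * (Real.sqrt (k ^ 4 + 1) * ‖f k‖) := by
        rw [norm_mul, normE, norm_mul, norm_neg, Complex.norm_real, Real.norm_eq_abs,
          abs_of_nonneg hk0]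
      rw [heq]
      calc Real.exp (-(Real.sqrt (k ^ 4 + 1)) * s) * (Real.sqrt (k ^ 4 + 1) * ‖f k‖)
          ≤ Real.exp (Real.sqrt (k ^ 4 + 1) * (|t| + 1)) * (Real.sqrt (k ^ 4 + 1) * ‖f k‖) := by
            apply mul_le_mul_of_nonneg_right hexp
            positivity
        _ = Real.sqrt (k ^ 4 + 1) * (Real.exp (Real.sqrt (k ^ 4 + 1) * (|t| + 1)) * ‖f k‖) := by
            ring)
    (by
      apply Continuous.integrable_of_hasCompactSupport
      · fun_prop
      · have : (fun k : ℝ => Real.sqrt (k ^ 4 + 1)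
            * (Real.exp (Real.sqrt (k ^ 4 + 1) * (|t| + 1)) * ‖f k‖))
            = (fun k : ℝ => Real.sqrt (k ^ 4 + 1)
              * Real.exp (Real.sqrt (k ^ 4 + 1) * (|t| + 1))) * (fun k => ‖f k‖) := by
          funext k; simp [Pi.mul_apply]; ring
        rw [this]
        exact hs.norm.mul_left)
    (Filter.Eventually.of_forall fun k s _ => by
      have h := (hasDerivAt_E_t x k s).mul_const (f k)
      convert h using 1
      · rfl
      ring)
  exact H.2

/-- The optimal state of the LQ-controlled heat equation, represented as a
Fourier-type integral `φ(x,t) = (1/(2π)) ∫ exp(i k x − ω(k) t) f(k) dk`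
with `ω(k) = √(k⁴ + 1)`. -/
noncomputable def heatOptState (f : ℝ → ℂ) (x t : ℝ) : ℂ :=
  (1 / (2 * Real.pi)) •
    ∫ k : ℝ, Complex.exp (Complex.I * (k : ℂ) * (x : ℂ)
      - (Real.sqrt (k ^ 4 + 1) : ℂ) * (t : ℂ)) * f k

/-- The optimal control of the LQ-controlled heat equation, represented as
`u(x,t) = (1/(2π)) ∫ exp(i k x − ω(k) t) (k² − ω(k)) f(k) dk`. -/
noncomputable def heatOptControl (f : ℝ → ℂ) (x t : ℝ) : ℂ :=
  (1 / (2 * Real.pi)) •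
    ∫ k : ℝ, Complex.exp (Complex.I * (k : ℂ) * (x : ℂ)
      - (Real.sqrt (k ^ 4 + 1) : ℂ) * (t : ℂ))
      * (((k : ℂ) ^ 2 - (Real.sqrt (k ^ 4 + 1) : ℂ)) * f k)

/-- for `f` continuous with compact support, the integral
representations `φ` and `u` satisfy the state equation
`∂φ/∂t = ∂²φ/∂x² + u` on all of `ℝ²`. -/
theorem heatOpt_state_equation (f : ℝ → ℂ)
    (hf : Continuous f) (hsupp : HasCompactSupport f) :
    ∀ x t : ℝ,
      deriv (fun s : ℝ => heatOptState f x s) t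
        = deriv (fun y : ℝ => deriv (fun z : ℝ => heatOptState f z t) y) x
          + heatOptControl f x t := by
  intro x t
  simp only [heatOptState, heatOptControl]
  rw [((key_t f hf hsupp x t).fun_const_smul ((1:ℝ)/(2*Real.pi))).deriv]
  have hx1 : (fun y : ℝ => deriv (fun z : ℝ => (1/(2*Real.pi)) • ∫ k : ℝ, E0 z t k * f k) y)
      = fun y : ℝ => (1/(2*Real.pi)) • ∫ k : ℝ, E0 y t k * (Complex.I * k * f k) := by
    funext y
    exact ((key_x f hf hsupp t y).fun_const_smul ((1:ℝ)/(2*Real.pi))).deriv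
  rw [hx1]
  have hf2 : Continuous (fun k : ℝ => Complex.I * (k : ℂ) * f k) := by fun_prop
  have hs2 : HasCompactSupport (fun k : ℝ => Complex.I * (k : ℂ) * f k) := hsupp.mul_left
  rw [((key_x _ hf2 hs2 t x).fun_const_smul ((1:ℝ)/(2*Real.pi))).deriv]
  rw [← smul_add]
  congr 1
  have ib : Integrable (fun k : ℝ => E0 x t k * (Complex.I * ↑k * (Complex.I * ↑k * f k))) := by
    have : (fun k : ℝ => E0 x t k * (Complex.I * ↑k * (Complex.I * ↑k * f k)))
        = fun k : ℝ => (E0 x t k * (Complex.I * ↑k) * (Complex.I * ↑k)) * f k := by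
      funext k; ring
    rw [this]
    exact integrable_mul f hf hsupp (by fun_prop)
  have ic : Integrable (fun k : ℝ => E0 x t k * (((k:ℂ) ^ 2 - (Real.sqrt (k ^ 4 + 1) : ℂ)) * f k)) := by
    have : (fun k : ℝ => E0 x t k * (((k:ℂ) ^ 2 - (Real.sqrt (k ^ 4 + 1) : ℂ)) * f k))
        = fun k : ℝ => (E0 x t k * ((k:ℂ) ^ 2 - (Real.sqrt (k ^ 4 + 1) : ℂ))) * f k := by
      funext k; ring
    rw [this]
    exact integrable_mul f hf hsupp (by fun_prop)
  rw [← integral_add ib ic]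
  congr 1
  funext k
  linear_combination (-(E0 x t k * (k:ℂ) ^ 2 * f k)) * Complex.I_sq
end

section
/- Let f : ℝ → ℂ be continuous with compact support, let ω(k) = √(k⁴ + 1), and define φ, u : ℝ × ℝ → ℂ by φ(x, t) = (1/(2π)) ∫_ℝ exp(i·k·x − ω(k)·t)·f(k) dk and u(x, t) = (1/(2π)) ∫_ℝ exp(i·k·x − ω(k)·t)·(k² − ω(k))·f(k) dk. Then for all (x, t) ∈ ℝ², φ(x,t) = ∂u/∂t (x,t) + ∂²u/∂x² (x,t). -/
open MeasureTheory

lemma heatKey (a b : ℝ → ℂ) (ha : Continuous a) (hb : Continuous b)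
    (g : ℝ → ℂ) (hg : Continuous g) (hsg : HasCompactSupport g) (s₀ : ℝ) :
    HasDerivAt (fun s : ℝ => ∫ k : ℝ, Complex.exp (a k * s + b k) * g k)
      (∫ k : ℝ, Complex.exp (a k * s₀ + b k) * (a k * g k)) s₀ := by
  have hcont : ∀ s : ℝ, Continuous (fun k => Complex.exp (a k * s + b k) * g k) := by
    intro s
    exact (Complex.continuous_exp.comp (by continuity)).mul hg
  have hcont' : Continuous (fun p : ℝ × ℝ => Complex.exp (a p.1 * p.2 + b p.1) * (a p.1 * g p.1)) := by
    exact (Complex.continuous_exp.comp (by continuity)).mul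
      ((ha.comp continuous_fst).mul (hg.comp continuous_fst))
  have hsuppF : ∀ s : ℝ, HasCompactSupport (fun k => Complex.exp (a k * s + b k) * g k) :=
    fun s => hsg.mul_left
  have hint : ∀ s : ℝ, Integrable (fun k => Complex.exp (a k * s + b k) * g k) :=
    fun s => (hcont s).integrable_of_hasCompactSupport (hsuppF s)
  obtain ⟨C, hC⟩ := (hsg.prod (isCompact_Icc (a := s₀ - 1) (b := s₀ + 1))).exists_bound_of_continuousOn
    hcont'.continuousOn
  have main := hasDerivAt_integral_of_dominated_loc_of_deriv_le (μ := volume)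
    (F := fun (s : ℝ) k => Complex.exp (a k * s + b k) * g k)
    (F' := fun (s : ℝ) k => Complex.exp (a k * s + b k) * (a k * g k))
    (bound := (tsupport g).indicator (fun _ => C)) (s := Metric.ball s₀ 1) (Metric.ball_mem_nhds s₀ one_pos)
    (Filter.Eventually.of_forall fun s => (hcont s).aestronglyMeasurable)
    (hint s₀)
    ((hcont'.comp (Continuous.prodMk_left s₀)).aestronglyMeasurable)
    ?_ ?_ ?_
  · exact main.2
  · refine Filter.Eventually.of_forall fun k => fun (s : ℝ) hs => ?_
    by_cases hk : k ∈ tsupport g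
    · have hs' : s ∈ Set.Icc (s₀ - 1) (s₀ + 1) := by
        have := Metric.mem_ball.mp hs
        rw [Real.dist_eq] at this
        constructor <;> [linarith [abs_lt.mp this] ; linarith [abs_lt.mp this]]
      rw [Set.indicator_of_mem hk]
      exact hC (k, s) ⟨hk, hs'⟩
    · have : g k = 0 := image_eq_zero_of_notMem_tsupport hk
      rw [Set.indicator_of_notMem hk]
      simp [this]
  · rw [integrable_indicator_iff (isClosed_tsupport g).measurableSet]
    exact integrableOn_const hsg.isCompact.measure_lt_top.ne
  · refine Filter.Eventually.of_forall fun k => fun (s : ℝ) hs => ?_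
    have h0 : HasDerivAt (fun s : ℝ => (s : ℂ)) 1 s := by
      simpa using (hasDerivAt_id s).ofReal_comp
    have h1 := (((h0.const_mul (a k)).add_const (b k)).cexp).mul_const (g k)
    convert h1 using 1
    · rfl
    ring

theorem heatOpt_adjoint_equation' (f : ℝ → ℂ)
    (hf : Continuous f) (hsupp : HasCompactSupport f) :
    ∀ x t : ℝ,
      ((1 / (2 * Real.pi)) •
        ∫ k : ℝ, Complex.exp (Complex.I * (k : ℂ) * (x : ℂ)
          - (Real.sqrt (k ^ 4 + 1) : ℂ) * (t : ℂ)) * f k : ℂ)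
        = deriv (fun s : ℝ => (1 / (2 * Real.pi)) •
            ∫ k : ℝ, Complex.exp (Complex.I * (k : ℂ) * (x : ℂ)
              - (Real.sqrt (k ^ 4 + 1) : ℂ) * (s : ℂ))
              * (((k : ℂ) ^ 2 - (Real.sqrt (k ^ 4 + 1) : ℂ)) * f k)) t
          + deriv (fun y : ℝ => deriv (fun z : ℝ => (1 / (2 * Real.pi)) •
            ∫ k : ℝ, Complex.exp (Complex.I * (k : ℂ) * (z : ℂ)
              - (Real.sqrt (k ^ 4 + 1) : ℂ) * (t : ℂ))
              * (((k : ℂ) ^ 2 - (Real.sqrt (k ^ 4 + 1) : ℂ)) * f k)) y) x := by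
  intro x t
  set ω : ℝ → ℂ := fun k => (Real.sqrt (k ^ 4 + 1) : ℂ) with hωdef
  have hωc : Continuous ω :=
    Complex.continuous_ofReal.comp (Real.continuous_sqrt.comp
      ((continuous_pow 4).add continuous_const))
  have hIk : Continuous fun k : ℝ => Complex.I * (k : ℂ) :=
    continuous_const.mul Complex.continuous_ofReal
  set g₀ : ℝ → ℂ := fun k => ((k : ℂ) ^ 2 - ω k) * f k with hg₀def
  have hg₀c : Continuous g₀ :=
    (((Complex.continuous_ofReal.pow 2).sub hωc)).mul hf
  have hg₀s : HasCompactSupport g₀ := hsupp.mul_left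
  -- t-derivative
  have ht : deriv (fun s : ℝ => (1 / (2 * Real.pi)) •
      ∫ k : ℝ, Complex.exp (Complex.I * (k : ℂ) * (x : ℂ) - ω k * (s : ℂ)) * g₀ k) t
      = (1 / (2 * Real.pi)) •
        ∫ k : ℝ, Complex.exp (Complex.I * (k : ℂ) * (x : ℂ) - ω k * (t : ℂ)) * (-ω k * g₀ k) := by
    have hk := (heatKey (fun k => -ω k) (fun k => Complex.I * (k : ℂ) * (x : ℂ))
      hωc.neg (hIk.mul continuous_const) g₀ hg₀c hg₀s t).const_smul (1 / (2 * Real.pi))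
    have e1 : (fun s : ℝ => (1 / (2 * Real.pi)) •
        ∫ k : ℝ, Complex.exp (Complex.I * (k : ℂ) * (x : ℂ) - ω k * (s : ℂ)) * g₀ k)
        = fun s : ℝ => (1 / (2 * Real.pi)) •
        ∫ k : ℝ, Complex.exp ((-ω k) * (s : ℂ) + Complex.I * (k : ℂ) * (x : ℂ)) * g₀ k := by
      funext s
      congr 1
      refine integral_congr_ae (Filter.Eventually.of_forall fun k => ?_)
      exact congrArg (fun z => Complex.exp z * g₀ k) (by ring)
    simp only [Pi.smul_def] at hk
    rw [e1, hk.deriv]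
    congr 1
    refine integral_congr_ae (Filter.Eventually.of_forall fun k => ?_)
    exact congrArg (fun z => Complex.exp z * (-ω k * g₀ k)) (by ring)
  -- x-derivative (first)
  have hx : ∀ y : ℝ, deriv (fun z : ℝ => (1 / (2 * Real.pi)) •
      ∫ k : ℝ, Complex.exp (Complex.I * (k : ℂ) * (z : ℂ) - ω k * (t : ℂ)) * g₀ k) y
      = (1 / (2 * Real.pi)) •
        ∫ k : ℝ, Complex.exp ((Complex.I * (k : ℂ)) * (y : ℂ) + -(ω k * (t : ℂ)))
          * (Complex.I * (k : ℂ) * g₀ k) := by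
    intro y
    have hk := (heatKey (fun k => Complex.I * (k : ℂ)) (fun k => -(ω k * (t : ℂ)))
      hIk ((hωc.mul continuous_const).neg) g₀ hg₀c hg₀s y).const_smul (1 / (2 * Real.pi))
    have e1 : (fun z : ℝ => (1 / (2 * Real.pi)) •
        ∫ k : ℝ, Complex.exp (Complex.I * (k : ℂ) * (z : ℂ) - ω k * (t : ℂ)) * g₀ k)
        = fun z : ℝ => (1 / (2 * Real.pi)) •
        ∫ k : ℝ, Complex.exp ((Complex.I * (k : ℂ)) * (z : ℂ) + -(ω k * (t : ℂ))) * g₀ k := by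
      funext z
      congr 1
    simp only [Pi.smul_def] at hk
    rw [e1, hk.deriv]
  -- second x-derivative
  set g₁ : ℝ → ℂ := fun k => Complex.I * (k : ℂ) * g₀ k with hg₁def
  have hg₁c : Continuous g₁ := hIk.mul hg₀c
  have hg₁s : HasCompactSupport g₁ := hg₀s.mul_left
  have hxx : deriv (fun y : ℝ => deriv (fun z : ℝ => (1 / (2 * Real.pi)) •
      ∫ k : ℝ, Complex.exp (Complex.I * (k : ℂ) * (z : ℂ) - ω k * (t : ℂ)) * g₀ k) y) x
      = (1 / (2 * Real.pi)) •
        ∫ k : ℝ, Complex.exp (Complex.I * (k : ℂ) * (x : ℂ) - ω k * (t : ℂ))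
          * (Complex.I * (k : ℂ) * g₁ k) := by
    have e1 : (fun y : ℝ => deriv (fun z : ℝ => (1 / (2 * Real.pi)) •
        ∫ k : ℝ, Complex.exp (Complex.I * (k : ℂ) * (z : ℂ) - ω k * (t : ℂ)) * g₀ k) y)
        = fun y : ℝ => (1 / (2 * Real.pi)) •
        ∫ k : ℝ, Complex.exp ((Complex.I * (k : ℂ)) * (y : ℂ) + -(ω k * (t : ℂ))) * g₁ k := by
      funext y
      rw [hx y]
    rw [e1]
    have hk := (heatKey (fun k => Complex.I * (k : ℂ)) (fun k => -(ω k * (t : ℂ)))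
      hIk ((hωc.mul continuous_const).neg) g₁ hg₁c hg₁s x).const_smul (1 / (2 * Real.pi))
    simp only [Pi.smul_def] at hk
    rw [hk.deriv]
    congr 1
  rw [ht, hxx, ← smul_add]
  have hec : Continuous fun k : ℝ => Complex.I * (k : ℂ) * (x : ℂ) - ω k * (t : ℂ) :=
    (hIk.mul continuous_const).sub (hωc.mul continuous_const)
  have hi1 : Integrable (fun k : ℝ =>
      Complex.exp (Complex.I * (k : ℂ) * (x : ℂ) - ω k * (t : ℂ)) * (-ω k * g₀ k)) :=
    ((Complex.continuous_exp.comp hec).mul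
      (hωc.neg.mul hg₀c)).integrable_of_hasCompactSupport ((hg₀s.mul_left).mul_left)
  have hi2 : Integrable (fun k : ℝ =>
      Complex.exp (Complex.I * (k : ℂ) * (x : ℂ) - ω k * (t : ℂ)) * (Complex.I * (k : ℂ) * g₁ k)) :=
    ((Complex.continuous_exp.comp hec).mul
      (hIk.mul hg₁c)).integrable_of_hasCompactSupport ((hg₁s.mul_left).mul_left)
  rw [← integral_add hi1 hi2]
  congr 1
  refine integral_congr_ae (Filter.Eventually.of_forall fun k => ?_)
  have hsq : (ω k) ^ 2 = (k : ℂ) ^ 4 + 1 := by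
    rw [hωdef]
    rw [← Complex.ofReal_pow, Real.sq_sqrt (by positivity)]
    push_cast
    ring
  have hI : (Complex.I) ^ 2 = -1 := Complex.I_sq
  show Complex.exp (Complex.I * (k : ℂ) * (x : ℂ) - ω k * (t : ℂ)) * f k
    = Complex.exp (Complex.I * (k : ℂ) * (x : ℂ) - ω k * (t : ℂ)) * (-ω k * g₀ k)
      + Complex.exp (Complex.I * (k : ℂ) * (x : ℂ) - ω k * (t : ℂ)) * (Complex.I * (k : ℂ) * g₁ k)
  rw [hg₁def, hg₀def]
  set E := Complex.exp (Complex.I * (k : ℂ) * (x : ℂ) - ω k * (t : ℂ))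
  linear_combination (-(E * f k)) * hsq + (E * f k * ((k:ℂ)^2 * ω k - (k:ℂ)^4)) * hI

/-- for `f` continuous with compact support, the integral
representations `φ` and `u` satisfy the adjoint equation
`φ = ∂u/∂t + ∂²u/∂x²` of the first-order optimality system, on all of `ℝ²`. -/
theorem heatOpt_adjoint_equation (f : ℝ → ℂ)
    (hf : Continuous f) (hsupp : HasCompactSupport f) :
    ∀ x t : ℝ,
      heatOptState f x t
        = deriv (fun s : ℝ => heatOptControl f x s) t
          + deriv (fun y : ℝ => deriv (fun z : ℝ => heatOptControl f z t) y) x := by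
  intro x t
  simp only [heatOptState, heatOptControl]
  exact heatOpt_adjoint_equation' f hf hsupp x t
end

section
/- Fix a ∈ ℝ, x₀ ∈ ℝ, and set p = a + √(a² + 1). Let x : ℝ → ℝ be differentiable on [0, ∞) with x(0) = x₀ and x(t) → 0 as t → ∞, and set u(t) = x'(t) − a·x(t) (so that x' = a x + u). Assume that t ↦ x(t)² and t ↦ u(t)² are integrable on [0, ∞). Then ∫₀^∞ (x(t)² + u(t)²) dt ≥ p·x₀². -/
open MeasureTheory

/-- scalar LQR lower bound. Fix `a, x₀ ∈ ℝ` and let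
`p = a + √(a² + 1)` (the positive root of the Riccati equation `p² − 2ap − 1 = 0`).
For any trajectory `x` differentiable on `[0,∞)` with `x 0 = x₀` and `x t → 0`
as `t → ∞`, with control `u(t) = x'(t) − a·x(t)` (so that `x' = a x + u`), and
with `x²` and `u²` integrable on `[0,∞)`, the cost satisfies
`∫₀^∞ (x² + u²) ≥ p·x₀²`. -/
theorem scalar_lqr_lower_bound
    (a x₀ p : ℝ) (hp : p = a + Real.sqrt (a ^ 2 + 1))
    (x : ℝ → ℝ)
    (hdiff : DifferentiableOn ℝ x (Set.Ici (0 : ℝ)))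
    (hx0 : x 0 = x₀)
    (hlim : Filter.Tendsto x Filter.atTop (nhds 0))
    (u : ℝ → ℝ)
    (hu : ∀ t ∈ Set.Ici (0 : ℝ), u t = derivWithin x (Set.Ici (0 : ℝ)) t - a * x t)
    (hx2 : IntegrableOn (fun t => x t ^ 2) (Set.Ici (0 : ℝ)))
    (hu2 : IntegrableOn (fun t => u t ^ 2) (Set.Ici (0 : ℝ))) :
    p * x₀ ^ 2 ≤ ∫ t in Set.Ici (0 : ℝ), (x t ^ 2 + u t ^ 2) := by
  have h1 : (0:ℝ) ≤ a ^ 2 + 1 := by positivity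
  have hpp : p ^ 2 - 2 * a * p = 1 := by
    subst hp
    nlinarith [Real.sq_sqrt h1]
  have hcont : ContinuousOn x (Set.Ici (0:ℝ)) := hdiff.continuousOn
  -- derivative identity on Ioi 0
  have hderiv : ∀ t ∈ Set.Ioi (0:ℝ), HasDerivAt x (u t + a * x t) t := by
    intro t ht
    have hnt : Set.Ici (0:ℝ) ∈ nhds t := Ici_mem_nhds ht
    have hd : DifferentiableAt ℝ x t := (hdiff t (Set.mem_Ici.2 (le_of_lt ht))).differentiableAt hnt
    have hdw : derivWithin x (Set.Ici (0:ℝ)) t = deriv x t := derivWithin_of_mem_nhds hnt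
    have hut : u t = deriv x t - a * x t := by rw [hu t (Set.mem_Ici.2 (le_of_lt ht)), hdw]
    have : u t + a * x t = deriv x t := by rw [hut]; ring
    rw [this]
    exact hd.hasDerivAt
  -- measurability of x and u on Ioi 0
  have hxm : AEStronglyMeasurable x (volume.restrict (Set.Ioi (0:ℝ))) :=
    (hcont.mono Set.Ioi_subset_Ici_self).aestronglyMeasurable measurableSet_Ioi
  have hum : AEStronglyMeasurable u (volume.restrict (Set.Ioi (0:ℝ))) := by
    have : u =ᶠ[ae (volume.restrict (Set.Ioi (0:ℝ)))]
        (fun t => deriv x t - a * x t) := by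
      refine (ae_restrict_iff' measurableSet_Ioi).2 (Filter.Eventually.of_forall ?_)
      intro t ht
      have hnt : Set.Ici (0:ℝ) ∈ nhds t := Ici_mem_nhds ht
      rw [hu t (Set.mem_Ici.2 (le_of_lt ht)), derivWithin_of_mem_nhds hnt]
    exact AEStronglyMeasurable.congr
      (((measurable_deriv x).aestronglyMeasurable.sub (hxm.const_mul a))) this.symm
  have hx2' : IntegrableOn (fun t => x t ^ 2) (Set.Ioi (0:ℝ)) :=
    hx2.mono_set Set.Ioi_subset_Ici_self
  have hu2' : IntegrableOn (fun t => u t ^ 2) (Set.Ioi (0:ℝ)) :=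
    hu2.mono_set Set.Ioi_subset_Ici_self
  -- x*u integrable
  have hxu : IntegrableOn (fun t => x t * u t) (Set.Ioi (0:ℝ)) := by
    refine Integrable.mono' (hx2'.add hu2') (hxm.mul hum) ?_
    refine Filter.Eventually.of_forall fun t => ?_
    have := abs_mul (x t) (u t)
    rw [Real.norm_eq_abs]
    simp only [Pi.add_apply]
    nlinarith [sq_nonneg (|x t| - |u t|), sq_abs (x t), sq_abs (u t), abs_mul (x t) (u t),
      abs_nonneg (x t * u t)]
  set F' : ℝ → ℝ := fun t => p * (2 * x t ^ 1 * (u t + a * x t)) with hF'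
  have hF'int : IntegrableOn F' (Set.Ioi (0:ℝ)) := by
    have : IntegrableOn (fun t => (2 * p) * (x t * u t) + (2 * a * p) * x t ^ 2)
        (Set.Ioi (0:ℝ)) := (hxu.const_mul _).add (hx2'.const_mul _)
    refine this.congr_fun (fun t _ => ?_) measurableSet_Ioi
    simp only [hF']; ring
  have hderivF : ∀ t ∈ Set.Ioi (0:ℝ),
      HasDerivAt (fun s => p * x s ^ 2) (F' t) t := by
    intro t ht
    exact ((hderiv t ht).pow 2).const_mul p
  have hcont0 : ContinuousWithinAt (fun s => p * x s ^ 2) (Set.Ici (0:ℝ)) 0 :=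
    ((hcont 0 Set.self_mem_Ici).pow 2).const_mul p
  have htend : Filter.Tendsto (fun s => p * x s ^ 2) Filter.atTop (nhds 0) := by
    have := (hlim.pow 2).const_mul p
    simpa using this
  have hFTC : ∫ t in Set.Ioi (0:ℝ), F' t = 0 - p * x 0 ^ 2 :=
    MeasureTheory.integral_Ioi_of_hasDerivAt_of_tendsto hcont0 hderivF hF'int htend
  -- square integrable
  have hsq : IntegrableOn (fun t => (u t + p * x t) ^ 2) (Set.Ioi (0:ℝ)) := by
    have : IntegrableOn (fun t => u t ^ 2 + (2 * p) * (x t * u t) + p ^ 2 * x t ^ 2)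
        (Set.Ioi (0:ℝ)) := (hu2'.add (hxu.const_mul _)).add (hx2'.const_mul _)
    refine this.congr_fun (fun t _ => ?_) measurableSet_Ioi
    ring
  have key : ∀ t, x t ^ 2 + u t ^ 2 = (u t + p * x t) ^ 2 - F' t := by
    intro t
    simp only [hF']
    linear_combination (-(x t) ^ 2) * hpp
  have heq : ∫ t in Set.Ioi (0:ℝ), (x t ^ 2 + u t ^ 2)
      = (∫ t in Set.Ioi (0:ℝ), (u t + p * x t) ^ 2) - ∫ t in Set.Ioi (0:ℝ), F' t := by
    rw [← MeasureTheory.integral_sub hsq hF'int]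
    exact integral_congr_ae (Filter.Eventually.of_forall fun t => key t)
  have hIci : ∫ t in Set.Ici (0:ℝ), (x t ^ 2 + u t ^ 2)
      = ∫ t in Set.Ioi (0:ℝ), (x t ^ 2 + u t ^ 2) :=
    MeasureTheory.integral_Ici_eq_integral_Ioi
  have hnn : 0 ≤ ∫ t in Set.Ioi (0:ℝ), (u t + p * x t) ^ 2 :=
    integral_nonneg fun t => sq_nonneg _
  rw [hIci, heq, hFTC, hx0]
  linarith
end
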